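/- Suppose t_1 = t_2 = ⋯ = t_{n−2} = 1 and let C = ℂ[s_1, s_2, …, s_{n−2}] be the ℂ-subalgebra of A generated by s_1, …, s_{n−2}. If P is a proper Poisson prime ideal of A, then P is a minimal prime ideal of A over the extended ideal (P ∩ C)·A; in particular there exists a prime ideal Q of C (namely Q = P ∩ C) such that P is a minimal prime over Q·A. -/

import Mathlib

set_option maxHeartbeats 1000000
set_option synthInstance.maxHeartbeats 400000

noncomputable section
open MvPolynomial

/-- The polynomial algebra `A = ℂ[x_1,…,x_{m+2}]`. -/
abbrev PA (m : ℕ) : Type := MvPolynomial (Fin (m + 2)) ℂ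

/-- The rational function field `B = ℂ(x_1,…,x_{m+2})`. -/
abbrev FB (m : ℕ) : Type := FractionRing (PA m)

/-- The rows of the matrix computing the Poisson bracket on `A`: ∇f, ∇g and, for
each `i`, `t_i²∇(s_i/t_i) = t_i∇s_i − s_i∇t_i`. -/
def pbrRows {m : ℕ} (s t : Fin m → PA m) (f g : PA m) :
    Fin (m + 2) → Fin (m + 2) → PA m :=
  Fin.cons (fun j => pderiv j f)
    (Fin.cons (fun j => pderiv j g)
      (fun k => fun j => t k * pderiv j (s k) - s k * pderiv j (t k)))

/-- The Poisson bracket `{f,g} = (t_1⋯t_m)²·Jac(f,g,s_1/t_1,…,s_m/t_m)` restricted to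
the polynomial algebra `A`. -/
def pbr {m : ℕ} (s t : Fin m → PA m) (f g : PA m) : PA m :=
  Matrix.det (Matrix.of (pbrRows s t f g))

namespace St12
open Polynomial

variable {m : ℕ}

/-! ### Derivation properties of the bracket -/

/-- gradient -/
def grad {m : ℕ} (f : PA m) : Fin (m + 2) → PA m := fun j => pderiv j f

lemma pbrRows_one (s : Fin m → PA m) (f g : PA m) :
    pbrRows s (fun _ => 1) f g =
      Fin.cons (grad f) (Fin.cons (grad g) (fun k => grad (s k))) := by
  unfold pbrRows grad
  congr 1
  congr 1
  funext k j
  simp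

/-- base matrix with hole in row 0 -/
def rowsAux (s : Fin m → PA m) (g : PA m) : Matrix (Fin (m+2)) (Fin (m+2)) (PA m) :=
  Matrix.of (Fin.cons 0 (Fin.cons (grad g) (fun k => grad (s k))))

lemma of_cons_eq_updateRow (s : Fin m → PA m) (w : Fin (m+2) → PA m) (g : PA m) :
    Matrix.of (Fin.cons w (Fin.cons (grad g) (fun k => grad (s k))))
      = (rowsAux s g).updateRow 0 w := by
  ext i j
  refine Fin.cases ?_ (fun i => ?_) i
  · simp [rowsAux, Matrix.updateRow_self]
  · simp [rowsAux, Matrix.updateRow_ne (Fin.succ_ne_zero i)]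

lemma pbr_eq (s : Fin m → PA m) (f g : PA m) :
    pbr s (fun _ => 1) f g = ((rowsAux s g).updateRow 0 (grad f)).det := by
  rw [pbr, pbrRows_one, of_cons_eq_updateRow]

lemma grad_add (f g : PA m) : grad (f + g) = grad f + grad g := by
  funext j; simp [grad]

lemma grad_mul (f g : PA m) : grad (f * g) = f • grad g + g • grad f := by
  funext j
  simp only [grad, pderiv_mul, Pi.add_apply, Pi.smul_apply, smul_eq_mul]
  ring

lemma pbr_add_left (s : Fin m → PA m) (f f' g : PA m) :
    pbr s (fun _ => 1) (f + f') g
      = pbr s (fun _ => 1) f g + pbr s (fun _ => 1) f' g := by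
  rw [pbr_eq, pbr_eq, pbr_eq, grad_add, Matrix.det_updateRow_add]

lemma pbr_mul_left (s : Fin m → PA m) (f f' g : PA m) :
    pbr s (fun _ => 1) (f * f') g
      = f * pbr s (fun _ => 1) f' g + f' * pbr s (fun _ => 1) f g := by
  rw [pbr_eq, pbr_eq, pbr_eq, grad_mul, Matrix.det_updateRow_add,
    Matrix.det_updateRow_smul, Matrix.det_updateRow_smul]

lemma pbr_algebraMap_left (s : Fin m → PA m) (c : ℂ) (g : PA m) :
    pbr s (fun _ => 1) (algebraMap ℂ (PA m) c) g = 0 := by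
  rw [pbr_eq]
  apply Matrix.det_eq_zero_of_row_eq_zero (i := 0)
  intro j
  rw [Matrix.updateRow_self]
  simp [grad, MvPolynomial.algebraMap_eq]

lemma pbr_self (s : Fin m → PA m) (g : PA m) : pbr s (fun _ => 1) g g = 0 := by
  rw [pbr_eq]
  refine Matrix.det_zero_of_row_eq (i := 0) (j := 1) (by simp [Fin.ext_iff]) ?_
  rw [Matrix.updateRow_self, Matrix.updateRow_ne (by simp [Fin.ext_iff])]
  show grad g = rowsAux s g 1
  simp [rowsAux]
  rfl

lemma pbr_s_left (s : Fin m → PA m) (k : Fin m) (g : PA m) :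
    pbr s (fun _ => 1) (s k) g = 0 := by
  rw [pbr_eq]
  refine Matrix.det_zero_of_row_eq (i := 0) (j := k.succ.succ)
    ((Fin.succ_ne_zero k.succ).symm) ?_
  rw [Matrix.updateRow_self, Matrix.updateRow_ne (by simp [Fin.ext_iff])]
  show grad (s k)
      = (Fin.cons 0 (Fin.cons (grad g) (fun k => grad (s k)))
          : Fin (m+2) → Fin (m+2) → PA m) k.succ.succ
  rw [Fin.cons_succ, Fin.cons_succ]

lemma pbr_antisymm (s : Fin m → PA m) (f g : PA m) :
    pbr s (fun _ => 1) g f = - pbr s (fun _ => 1) f g := by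
  have h : (Matrix.of (pbrRows s (fun _ => 1) f g)).submatrix
      (⇑(Equiv.swap (0:Fin (m+2)) 1)) id = Matrix.of (pbrRows s (fun _ => 1) g f) := by
    ext i j
    rw [pbrRows_one, pbrRows_one]
    refine Fin.cases ?_ (fun i => ?_) i
    · simp [Matrix.submatrix_apply, Equiv.swap_apply_left]
    · refine Fin.cases ?_ (fun i' => ?_) i
      · simp [Matrix.submatrix_apply, Equiv.swap_apply_right]
      · have h1 : (i'.succ.succ : Fin (m+2)) ≠ 0 := by simp [Fin.ext_iff]
        have h2 : (i'.succ.succ : Fin (m+2)) ≠ 1 := by simp [Fin.ext_iff]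
        simp [Matrix.submatrix_apply, Equiv.swap_apply_of_ne_of_ne h1 h2]
  have := Matrix.det_permute (Equiv.swap (0:Fin (m+2)) 1)
    (Matrix.of (pbrRows s (fun _ => 1) f g))
  rw [h] at this
  rw [pbr, pbr, this]
  simp

/-! ### Chain rules -/

lemma chain_mv {B M : Type} [CommRing B] [Algebra ℂ B] [AddCommGroup M] [Module B M]
    (D : B → M) (hadd : ∀ a b, D (a + b) = D a + D b)
    (hmul : ∀ a b, D (a * b) = a • D b + b • D a)
    (hc : ∀ c : ℂ, D (algebraMap ℂ B c) = 0)
    {n : ℕ} (x : Fin n → B) (t : MvPolynomial (Fin n) ℂ) :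
    D (aeval x t) = ∑ j, aeval x (pderiv j t) • D (x j) := by
  induction t using MvPolynomial.induction_on with
  | C c => simp [hc c]
  | add p q hp hq =>
      rw [map_add, hadd, hp, hq, ← Finset.sum_add_distrib]
      refine Finset.sum_congr rfl (fun j _ => ?_)
      simp [map_add, add_smul]
  | mul_X p i hp =>
      rw [map_mul, MvPolynomial.aeval_X, hmul, hp]
      have key : ∀ j, aeval x (pderiv j (p * X i)) • D (x j)
          = ((x i * aeval x (pderiv j p)) • D (x j))
            + (if j = i then aeval x p • D (x i) else 0) := by
        intro j
        rw [pderiv_mul, MvPolynomial.pderiv_X]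
        by_cases h : j = i
        · subst h
          rw [Pi.single_eq_same, if_pos rfl]
          simp only [map_add, map_mul, MvPolynomial.aeval_X, mul_one, add_smul]
          rw [mul_comm]
        · rw [Pi.single_eq_of_ne (Ne.symm h), if_neg h]
          simp only [map_add, map_mul, MvPolynomial.aeval_X, mul_zero, map_zero, add_zero]
          rw [mul_comm]
      rw [Finset.sum_congr rfl (fun j _ => key j), Finset.sum_add_distrib,
        Finset.sum_ite_eq' Finset.univ i (fun _ => aeval x p • D (x i))]
      simp only [Finset.mem_univ, if_true]
      rw [Finset.smul_sum, add_comm]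
      congr 1
      refine Finset.sum_congr rfl (fun j _ => ?_)
      rw [smul_smul]

variable {R B : Type} [CommRing R] [CommRing B]

/-- chain rule for one-variable polynomial evaluation -/
lemma chain_poly (D : B → B) (hadd : ∀ a b, D (a + b) = D a + D b)
    (hmul : ∀ a b, D (a * b) = a * D b + b * D a)
    (φ : R →+* B) (hφ : ∀ r, D (φ r) = 0) (t : B) (F : R[X]) :
    D (eval₂ φ t F) = eval₂ φ t (derivative F) * D t := by
  have hpow : ∀ n : ℕ, D (t ^ (n + 1)) = (n + 1 : B) * (t ^ n * D t) := by
    intro n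
    induction n with
    | zero => simp [hmul]
    | succ k ih =>
        rw [pow_succ, hmul, ih]
        push_cast
        ring
  induction F using Polynomial.induction_on with
  | C a => rw [Polynomial.eval₂_C, hφ, derivative_C, Polynomial.eval₂_zero, zero_mul]
  | add p q hp hq => rw [Polynomial.eval₂_add, hadd, hp, hq, derivative_add, Polynomial.eval₂_add, add_mul]
  | monomial n a _ =>
      rw [Polynomial.eval₂_mul, Polynomial.eval₂_C, Polynomial.eval₂_X_pow, hmul, hφ, mul_zero, add_zero, hpow]
      rw [derivative_C_mul, derivative_X_pow]
      simp only [Nat.add_sub_cancel]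
      simp only [Polynomial.eval₂_mul, Polynomial.eval₂_C, Polynomial.eval₂_X_pow, Polynomial.eval₂_add, Polynomial.eval₂_natCast, Polynomial.eval₂_one,
        map_add, map_natCast, map_one]
      push_cast
      ring

/-- If all coefficients map into an ideal, so does the evaluation. -/
lemma key0 (φ : R →+* B) (t : B) (J : Ideal B) (F : R[X])
    (h : ∀ i, φ (F.coeff i) ∈ J) : eval₂ φ t F ∈ J := by
  rw [Polynomial.eval₂_eq_sum_range]
  exact Ideal.sum_mem J (fun i _ => Ideal.mul_mem_right _ _ (h i))

/-- Derivation-stable prime + nonvanishing derivative ⇒ all coefficients lie in P. -/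
lemma key1 (P : Ideal B) (hP : P.IsPrime)
    (hQ : ∀ k : ℕ, IsUnit ((k + 1 : ℕ) : B))
    (D : B → B) (hadd : ∀ a b, D (a + b) = D a + D b)
    (hmul : ∀ a b, D (a * b) = a * D b + b * D a)
    (hDP : ∀ u ∈ P, D u ∈ P)
    (φ : R →+* B) (hφ : ∀ r, D (φ r) = 0) (t : B) (hDt : D t ∉ P) :
    ∀ F : R[X], eval₂ φ t F ∈ P → ∀ i, φ (F.coeff i) ∈ P := by
  have main : ∀ n : ℕ, ∀ F : R[X], F.natDegree ≤ n → eval₂ φ t F ∈ P →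
      ∀ i, φ (F.coeff i) ∈ P := by
    intro n
    induction n with
    | zero =>
        intro F hdeg hF i
        obtain ⟨a, rfl⟩ := Polynomial.natDegree_eq_zero.mp (Nat.le_zero.mp hdeg)
        rcases i with _ | i
        · rwa [coeff_C_zero, ← Polynomial.eval₂_C φ t]
        · simp only [coeff_C_succ, map_zero]; exact P.zero_mem
    | succ n ih =>
        intro F hdeg hF i
        have hder : eval₂ φ t (derivative F) ∈ P := by
          have h1 : D (eval₂ φ t F) ∈ P := hDP _ hF
          rw [chain_poly D hadd hmul φ hφ t F] at h1
          exact (hP.mem_or_mem h1).resolve_right hDt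
        have hcoeff_succ : ∀ j, φ (F.coeff (j + 1)) ∈ P := by
          intro j
          have hdd : (derivative F).natDegree ≤ n := by
            by_cases h0 : F.natDegree = 0
            · have : derivative F = 0 := by
                obtain ⟨a, rfl⟩ := Polynomial.natDegree_eq_zero.mp h0
                simp
              rw [this]; simp
            · exact Nat.lt_succ_iff.mp (lt_of_lt_of_le
                (Polynomial.natDegree_derivative_lt h0) hdeg)
          have hthis := ih (derivative F) hdd hder j
          rw [coeff_derivative] at hthis
          rw [map_mul] at hthis
          have hcast : φ ((j : R) + 1) = ((j + 1 : ℕ) : B) := by push_cast; simp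
          rw [hcast] at hthis
          rcases hP.mem_or_mem hthis with h | h
          · exact h
          · exact absurd h
              (fun hh => (hP.ne_top (Ideal.eq_top_of_isUnit_mem P hh (hQ j))))
        rcases i with _ | i
        · have hdiv : eval₂ φ t (F.divX) ∈ P :=
            key0 φ t P _ (fun i => by rw [coeff_divX]; exact hcoeff_succ i)
          have heq : eval₂ φ t F = t * eval₂ φ t F.divX + φ (F.coeff 0) := by
            conv_lhs => rw [← Polynomial.X_mul_divX_add (p := F)]
            rw [Polynomial.eval₂_add, Polynomial.eval₂_mul, Polynomial.eval₂_X, Polynomial.eval₂_C]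
          have h2 : φ (F.coeff 0) = eval₂ φ t F - t * eval₂ φ t F.divX := by
            rw [heq]; ring
          rw [h2]
          exact Ideal.sub_mem P hF (Ideal.mul_mem_left P t hdiv)
        · exact hcoeff_succ i
  exact fun F => main F.natDegree F le_rfl

lemma algebraic_rel {L : Type} [Field L] [Algebra ℂ L] {n : ℕ} (x : Fin n → L)
    (hfrac : ∀ l : L, ∃ b c : MvPolynomial (Fin n) ℂ,
      aeval x c ≠ 0 ∧ l * aeval x c = aeval x b)
    (F : Fin n → MvPolynomial (Fin n) ℂ)
    (hdet : (Matrix.of fun i j => aeval x (pderiv j (F i))).det ≠ 0)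
    (l : L) :
    ∃ (N : ℕ) (c : ℕ → MvPolynomial (Fin n) ℂ),
      aeval (fun i => aeval x (F i)) (c N) ≠ 0 ∧
      ∑ i ∈ Finset.range (N + 1), aeval (fun i => aeval x (F i)) (c i) * l ^ i = 0 := by
  classical
  set y : Fin n → L := fun i => aeval x (F i) with hy
  set K' : IntermediateField ℂ L := IntermediateField.adjoin ℂ (Set.range y) with hK'
  -- essential finite type over ℂ
  haveI hEFT : Algebra.EssFiniteType ℂ L := by
    refine ⟨⟨Finset.image x Finset.univ, ?_⟩⟩
    have hσ : ((Finset.image x Finset.univ : Finset L) : Set L) = Set.range x := by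
      rw [Finset.coe_image, Finset.coe_univ, Set.image_univ]
    constructor
    constructor
    · rintro ⟨z, hz⟩
      exact hz
    · intro z
      obtain ⟨b, cc, hc0, heq⟩ := hfrac z
      have hmb : aeval x b ∈ Algebra.adjoin ℂ ((Finset.image x Finset.univ : Finset L) : Set L) := by
        rw [hσ, Algebra.adjoin_range_eq_range_aeval]; exact ⟨b, rfl⟩
      have hmc : aeval x cc ∈ Algebra.adjoin ℂ ((Finset.image x Finset.univ : Finset L) : Set L) := by
        rw [hσ, Algebra.adjoin_range_eq_range_aeval]; exact ⟨cc, rfl⟩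
      refine ⟨⟨⟨aeval x b, hmb⟩, ⟨⟨aeval x cc, hmc⟩, ?_⟩⟩, ?_⟩
      · exact isUnit_iff_ne_zero.mpr hc0
      · exact heq
    · intro a b h
      exact ⟨1, by rw [Subtype.ext h]⟩
  -- unramified
  haveI hFU : Algebra.FormallyUnramified K' L := by
    set d := KaehlerDifferential.D K' L with hd
    have hcc : ∀ c : ℂ, d (algebraMap ℂ L c) = 0 := by
      intro c
      rw [IsScalarTower.algebraMap_apply ℂ K' L c]
      exact d.map_algebraMap _
    have hchain : ∀ t : MvPolynomial (Fin n) ℂ,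
        d (aeval x t) = ∑ j, aeval x (pderiv j t) • d (x j) :=
      fun t => chain_mv d (map_add d) d.leibniz hcc x t
    have hyd : ∀ i, d (y i) = 0 := by
      intro i
      have hmem : y i ∈ K' := IntermediateField.subset_adjoin ℂ _ ⟨i, rfl⟩
      have : y i = algebraMap K' L ⟨y i, hmem⟩ := rfl
      rw [this]
      exact d.map_algebraMap _
    set M : Matrix (Fin n) (Fin n) L := Matrix.of fun i j => aeval x (pderiv j (F i)) with hM
    have hMx : ∀ i, ∑ j, M i j • d (x j) = 0 := by
      intro i
      have h0 : (0 : Ω[L⁄K']) = ∑ j, M i j • d (x j) := by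
        rw [← hyd i]; exact hchain (F i)
      exact h0.symm
    have hdx : ∀ k, d (x k) = 0 := by
      intro k
      have h1 : ∑ j, (M.adjugate * M) k j • d (x j) = 0 := by
        have : ∀ j, (M.adjugate * M) k j • d (x j)
            = ∑ i, M.adjugate k i • (M i j • d (x j)) := by
          intro j
          rw [Matrix.mul_apply, Finset.sum_smul]
          exact Finset.sum_congr rfl fun i _ => (smul_smul _ _ _).symm
        rw [Finset.sum_congr rfl fun j _ => this j, Finset.sum_comm]
        rw [Finset.sum_congr rfl fun i (_ : i ∈ Finset.univ) => (Finset.smul_sum).symm]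
        refine Finset.sum_eq_zero fun i _ => ?_
        rw [hMx i, smul_zero]
      rw [Matrix.adjugate_mul] at h1
      have h2 : ∀ j, ((M.det • (1 : Matrix (Fin n) (Fin n) L)) k j • d (x j))
          = if j = k then M.det • d (x k) else 0 := by
        intro j
        rw [Matrix.smul_apply, Matrix.one_apply]
        by_cases h : j = k
        · subst h; simp
        · simp [Ne.symm h, h]
      rw [Finset.sum_congr rfl fun j _ => h2 j,
        Finset.sum_ite_eq' Finset.univ k (fun _ => M.det • d (x k))] at h1
      simp only [Finset.mem_univ, if_true] at h1
      rcases smul_eq_zero.mp h1 with h | h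
      · exact absurd h hdet
      · exact h
    have hdl : ∀ z : L, d z = 0 := by
      intro z
      obtain ⟨b, cc, hc0, heq⟩ := hfrac z
      have hb : d (aeval x b) = 0 := by
        rw [hchain b]; exact Finset.sum_eq_zero fun j _ => by rw [hdx j, smul_zero]
      have hc2 : d (aeval x cc) = 0 := by
        rw [hchain cc]; exact Finset.sum_eq_zero fun j _ => by rw [hdx j, smul_zero]
      have := congrArg d heq
      rw [d.leibniz, hc2, hb, smul_zero, zero_add] at this
      rcases smul_eq_zero.mp this with h | h
      · exact absurd h hc0
      · exact h
    refine ⟨?_⟩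
    have hspan := KaehlerDifferential.span_range_derivation K' L
    constructor
    intro a b
    have ha : ∀ ω : Ω[L⁄K'], ω = 0 := by
      intro ω
      have : ω ∈ Submodule.span L (Set.range (KaehlerDifferential.D K' L)) := by
        rw [hspan]; trivial
      refine Submodule.span_induction ?_ ?_ ?_ ?_ this
      · rintro _ ⟨z, rfl⟩; exact hdl z
      · rfl
      · intro u v _ _ hu hv; rw [hu, hv, add_zero]
      · intro a u _ hu; rw [hu, smul_zero]
    rw [ha a, ha b]
  haveI hEFT2 : Algebra.EssFiniteType K' L := Algebra.EssFiniteType.of_comp ℂ K' L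
  haveI hsep := Algebra.FormallyUnramified.isSeparable K' L
  have hint : IsIntegral K' l := Algebra.IsSeparable.isIntegral K' l
  obtain ⟨W, hW, hWl⟩ := hint
  set N := W.natDegree with hN
  set k : ℕ → L := fun i => algebraMap K' L (W.coeff i) with hk
  have hkrel : ∑ i ∈ Finset.range (N + 1), k i * l ^ i = 0 := by
    have h0 : ∑ i ∈ Finset.range (N + 1), W.coeff i • l ^ i = 0 := by
      rw [← Polynomial.aeval_eq_sum_range]; exact hWl
    rw [← h0]
    exact Finset.sum_congr rfl fun i _ => by rw [Algebra.smul_def]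
  have hkN : k N = 1 := by
    rw [hk]
    simp only [hN, hW.coeff_natDegree, map_one]
  have Pp : ∀ i, ∃ r sd : MvPolynomial (Fin n) ℂ,
      aeval y sd ≠ 0 ∧ k i * aeval y sd = aeval y r := by
    intro i
    by_cases hki : k i = 0
    · exact ⟨0, 1, by simp, by simp [hki]⟩
    · have hmem : k i ∈ K' := (W.coeff i).2
      rw [hK'] at hmem
      obtain ⟨r, sd, hrs⟩ := (IntermediateField.mem_adjoin_range_iff ℂ y (k i)).mp hmem
      have hs0 : aeval y sd ≠ 0 := by
        intro h0
        rw [h0, div_zero] at hrs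
        exact hki hrs
      exact ⟨r, sd, hs0, by rw [hrs, div_mul_cancel₀ _ hs0]⟩
  choose r sden hs0 hks using Pp
  refine ⟨N, fun i => r i * ∏ j ∈ (Finset.range (N + 1)).erase i, sden j, ?_, ?_⟩
  · rw [map_mul, map_prod]
    refine mul_ne_zero ?_ (Finset.prod_ne_zero_iff.mpr fun j _ => hs0 j)
    have := hks N
    rw [hkN, one_mul] at this
    rw [← this]
    exact hs0 N
  · have per : ∀ i ∈ Finset.range (N + 1),
        aeval y (r i * ∏ j ∈ (Finset.range (N + 1)).erase i, sden j) * l ^ i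
          = (k i * l ^ i) * ∏ j ∈ Finset.range (N + 1), aeval y (sden j) := by
      intro i hi
      have h1 : aeval y (r i) = k i * aeval y (sden i) := (hks i).symm
      have h2 : ∏ j ∈ Finset.range (N + 1), aeval y (sden j)
          = aeval y (sden i) * ∏ j ∈ (Finset.range (N + 1)).erase i, aeval y (sden j) :=
        (Finset.mul_prod_erase _ (fun j => aeval y (sden j)) hi).symm
      rw [map_mul, map_prod, h1, h2]
      ring
    rw [Finset.sum_congr rfl per, ← Finset.sum_mul, hkrel, zero_mul]



/-! ### The tower of evaluation maps -/

abbrev TT (m : ℕ) : Type := MvPolynomial (Fin m) ℂ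

def ψT (s : Fin m → PA m) : TT m →+* PA m := (MvPolynomial.aeval s).toRingHom

def ψP (s : Fin m → PA m) (g : PA m) : Polynomial (TT m) →+* PA m :=
  Polynomial.eval₂RingHom (ψT s) g

def ΦP (s : Fin m → PA m) (f g : PA m) : Polynomial (Polynomial (TT m)) →+* PA m :=
  Polynomial.eval₂RingHom (ψP s g) f

def Θm (m : ℕ) : MvPolynomial (Fin (m+2)) ℂ →+* Polynomial (Polynomial (TT m)) :=
  (Polynomial.mapRingHom
      ((MvPolynomial.finSuccEquiv ℂ m : MvPolynomial (Fin (m+1)) ℂ →+* Polynomial (TT m)))).comp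
    ((MvPolynomial.finSuccEquiv ℂ (m+1) :
      MvPolynomial (Fin (m+2)) ℂ →+* Polynomial (MvPolynomial (Fin (m+1)) ℂ)))

def Fv (s : Fin m → PA m) (f g : PA m) : Fin (m+2) → PA m := Fin.cons f (Fin.cons g s)

lemma PhiP_Theta (s : Fin m → PA m) (f g : PA m) (E : MvPolynomial (Fin (m+2)) ℂ) :
    ΦP s f g (Θm m E) = MvPolynomial.aeval (Fv s f g) E := by
  have h : (ΦP s f g).comp (Θm m) = (MvPolynomial.aeval (Fv s f g) : _ →ₐ[ℂ] _).toRingHom := by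
    apply MvPolynomial.ringHom_ext
    · intro c
      simp only [RingHom.comp_apply, Θm, ΦP, ψP, ψT]
      rw [show ((MvPolynomial.finSuccEquiv ℂ (m+1) :
          MvPolynomial (Fin (m+2)) ℂ →+* Polynomial (MvPolynomial (Fin (m+1)) ℂ)))
          (MvPolynomial.C c) = Polynomial.C (MvPolynomial.C c) from by
        simp [MvPolynomial.finSuccEquiv_apply]]
      rw [Polynomial.coe_mapRingHom, Polynomial.map_C]
      rw [show ((MvPolynomial.finSuccEquiv ℂ m :
          MvPolynomial (Fin (m+1)) ℂ →+* Polynomial (TT m)))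
          (MvPolynomial.C c) = Polynomial.C (MvPolynomial.C c) from by
        simp [MvPolynomial.finSuccEquiv_apply]]
      simp [Polynomial.coe_eval₂RingHom, MvPolynomial.algebraMap_eq]
    · intro i
      refine Fin.cases ?_ (fun i1 => ?_) i
      · simp only [RingHom.comp_apply, Θm, ΦP, ψP, ψT]
        rw [show ((MvPolynomial.finSuccEquiv ℂ (m+1) :
            MvPolynomial (Fin (m+2)) ℂ →+* Polynomial (MvPolynomial (Fin (m+1)) ℂ)))
            (MvPolynomial.X 0) = Polynomial.X from by
          simpa using MvPolynomial.finSuccEquiv_X_zero (R := ℂ) (n := m+1)]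
        simp [Polynomial.coe_mapRingHom, Polynomial.coe_eval₂RingHom, Fv]
      · refine Fin.cases ?_ (fun k => ?_) i1
        · simp only [RingHom.comp_apply, Θm, ΦP, ψP, ψT]
          rw [show ((MvPolynomial.finSuccEquiv ℂ (m+1) :
              MvPolynomial (Fin (m+2)) ℂ →+* Polynomial (MvPolynomial (Fin (m+1)) ℂ)))
              (MvPolynomial.X (Fin.succ 0)) = Polynomial.C (MvPolynomial.X 0) from by
            simpa using MvPolynomial.finSuccEquiv_X_succ (R := ℂ) (n := m+1) (j := 0)]
          rw [Polynomial.coe_mapRingHom, Polynomial.map_C]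
          rw [show ((MvPolynomial.finSuccEquiv ℂ m :
              MvPolynomial (Fin (m+1)) ℂ →+* Polynomial (TT m)))
              (MvPolynomial.X 0) = Polynomial.X from by
            simpa using MvPolynomial.finSuccEquiv_X_zero (R := ℂ) (n := m)]
          simp [Polynomial.coe_eval₂RingHom, Fv]
        · simp only [RingHom.comp_apply, Θm, ΦP, ψP, ψT]
          rw [show ((MvPolynomial.finSuccEquiv ℂ (m+1) :
              MvPolynomial (Fin (m+2)) ℂ →+* Polynomial (MvPolynomial (Fin (m+1)) ℂ)))
              (MvPolynomial.X (Fin.succ (Fin.succ k))) = Polynomial.C (MvPolynomial.X (Fin.succ k)) from by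
            simpa using MvPolynomial.finSuccEquiv_X_succ (R := ℂ) (n := m+1) (j := Fin.succ k)]
          rw [Polynomial.coe_mapRingHom, Polynomial.map_C]
          rw [show ((MvPolynomial.finSuccEquiv ℂ m :
              MvPolynomial (Fin (m+1)) ℂ →+* Polynomial (TT m)))
              (MvPolynomial.X (Fin.succ k)) = Polynomial.C (MvPolynomial.X k) from by
            simpa using MvPolynomial.finSuccEquiv_X_succ (R := ℂ) (n := m) (j := k)]
          simp [Polynomial.coe_eval₂RingHom, Fv, Fin.cons_succ]
  exact RingHom.congr_fun h E


/-! ### Membership transfer from `P` to `p` for elements of `ℂ[f,g,s]` -/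

lemma beta (s : Fin m → PA m) (f g : PA m) (P : Ideal (PA m)) (hP : P.IsPrime)
    (hpoisson : ∀ u ∈ P, ∀ r : PA m, pbr s (fun _ => 1) u r ∈ P)
    (hfg : pbr s (fun _ => 1) f g ∉ P)
    (p : Ideal (PA m))
    (hq : ∀ t : TT m, MvPolynomial.aeval s t ∈ P → MvPolynomial.aeval s t ∈ p)
    (W : Polynomial (Polynomial (TT m))) (hW : ΦP s f g W ∈ P) :
    ΦP s f g W ∈ p := by
  have hQ : ∀ k : ℕ, IsUnit ((k + 1 : ℕ) : PA m) := by
    intro k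
    rw [(map_natCast (algebraMap ℂ (PA m)) (k+1)).symm]
    exact (isUnit_iff_ne_zero.mpr (by exact_mod_cast Nat.succ_ne_zero k)).map _
  set Dg : PA m → PA m := fun u => pbr s (fun _ => 1) u g with hDg
  set Df : PA m → PA m := fun u => pbr s (fun _ => 1) u f with hDf
  have hDgadd : ∀ a b, Dg (a + b) = Dg a + Dg b := fun a b => pbr_add_left s a b g
  have hDgmul : ∀ a b, Dg (a * b) = a * Dg b + b * Dg a := fun a b => pbr_mul_left s a b g
  have hDfadd : ∀ a b, Df (a + b) = Df a + Df b := fun a b => pbr_add_left s a b f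
  have hDfmul : ∀ a b, Df (a * b) = a * Df b + b * Df a := fun a b => pbr_mul_left s a b f
  have hgT : ∀ t : TT m, Dg (ψT s t) = 0 := by
    intro t
    have hch := chain_mv (B := PA m) (M := PA m) Dg hDgadd
      (fun a b => by rw [hDgmul a b, smul_eq_mul, smul_eq_mul])
      (fun c => pbr_algebraMap_left s c g) s t
    rw [show ψT s t = MvPolynomial.aeval s t from rfl, hch]
    exact Finset.sum_eq_zero fun j _ => by
      rw [show Dg (s j) = pbr s (fun _ => 1) (s j) g from rfl, pbr_s_left, smul_zero]
  have hfT : ∀ t : TT m, Df (ψT s t) = 0 := by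
    intro t
    have hch := chain_mv (B := PA m) (M := PA m) Df hDfadd
      (fun a b => by rw [hDfmul a b, smul_eq_mul, smul_eq_mul])
      (fun c => pbr_algebraMap_left s c f) s t
    rw [show ψT s t = MvPolynomial.aeval s t from rfl, hch]
    exact Finset.sum_eq_zero fun j _ => by
      rw [show Df (s j) = pbr s (fun _ => 1) (s j) f from rfl, pbr_s_left, smul_zero]
  have hgP : ∀ G : Polynomial (TT m), Dg (ψP s g G) = 0 := by
    intro G
    have hch := chain_poly Dg hDgadd hDgmul (ψT s) hgT g G
    rw [show ψP s g G = Polynomial.eval₂ (ψT s) g G from rfl, hch,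
      show Dg g = pbr s (fun _ => 1) g g from rfl, pbr_self, mul_zero]
  have step1 : ∀ i, ψP s g (W.coeff i) ∈ P := by
    have h := key1 P hP hQ Dg hDgadd hDgmul (fun u hu => hpoisson u hu g)
      (ψP s g) hgP f hfg W
    exact h hW
  have hfgneg : Df g ∉ P := by
    rw [show Df g = pbr s (fun _ => 1) g f from rfl, pbr_antisymm]
    intro h
    exact hfg ((Ideal.neg_mem_iff P).mp h)
  have step2 : ∀ i j, ψT s ((W.coeff i).coeff j) ∈ p := by
    intro i j
    have h2 := key1 P hP hQ Df hDfadd hDfmul (fun u hu => hpoisson u hu f)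
      (ψT s) hfT g hfgneg (W.coeff i) (step1 i) j
    exact hq _ h2
  have step3 : ∀ i, ψP s g (W.coeff i) ∈ p :=
    fun i => key0 (ψT s) g p _ (fun j => step2 i j)
  exact key0 (ψP s g) f p W step3

/-! ### The main induction on powers of `a` -/

lemma lemA (s : Fin m → PA m) (f g : PA m) (P : Ideal (PA m)) (hP : P.IsPrime)
    (hpoisson : ∀ u ∈ P, ∀ r : PA m, pbr s (fun _ => 1) u r ∈ P)
    (hfg : pbr s (fun _ => 1) f g ∉ P)
    (p : Ideal (PA m)) (hpp : p.IsPrime) (hpP : p ≤ P)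
    (hq : ∀ t : TT m, MvPolynomial.aeval s t ∈ P → MvPolynomial.aeval s t ∈ p)
    (a : PA m) (haP : a ∈ P) (hap : a ∉ p) :
    ∀ (N : ℕ) (E : ℕ → Polynomial (Polynomial (TT m))),
      (∑ i ∈ Finset.range (N+1), ΦP s f g (E i) * a ^ i) ∈ p →
      ∀ i ≤ N, ΦP s f g (E i) ∈ p := by
  intro N
  induction N with
  | zero =>
      intro E hsum i hi
      rw [Nat.le_zero.mp hi]
      rwa [Finset.sum_range_one, pow_zero, mul_one] at hsum
  | succ n ih =>
      intro E hsum i hi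
      have hsplit : ∑ i ∈ Finset.range (n+1+1), ΦP s f g (E i) * a ^ i
          = ΦP s f g (E 0)
            + (∑ i ∈ Finset.range (n+1), ΦP s f g (E (i+1)) * a ^ i) * a := by
        rw [Finset.sum_range_succ' (fun i => ΦP s f g (E i) * a ^ i) (n+1),
          Finset.sum_mul, pow_zero, mul_one, add_comm]
        congr 1
        refine Finset.sum_congr rfl fun j _ => ?_
        rw [pow_succ]; ring
      have hE0P : ΦP s f g (E 0) ∈ P := by
        have h2 : ΦP s f g (E 0)
            = (∑ i ∈ Finset.range (n+1+1), ΦP s f g (E i) * a ^ i)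
              - (∑ i ∈ Finset.range (n+1), ΦP s f g (E (i+1)) * a ^ i) * a := by
          rw [hsplit]; ring
        rw [h2]
        exact Ideal.sub_mem P (hpP hsum) (Ideal.mul_mem_left P _ haP)
      have hE0p : ΦP s f g (E 0) ∈ p := beta s f g P hP hpoisson hfg p hq (E 0) hE0P
      have hrest : (∑ i ∈ Finset.range (n+1), ΦP s f g (E (i+1)) * a ^ i) * a ∈ p := by
        have h2 : (∑ i ∈ Finset.range (n+1), ΦP s f g (E (i+1)) * a ^ i) * a
            = (∑ i ∈ Finset.range (n+1+1), ΦP s f g (E i) * a ^ i) - ΦP s f g (E 0) := by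
          rw [hsplit]; ring
        rw [h2]
        exact Ideal.sub_mem p hsum hE0p
      have hrest2 : (∑ i ∈ Finset.range (n+1), ΦP s f g (E (i+1)) * a ^ i) ∈ p :=
        (hpp.mem_or_mem hrest).resolve_right hap
      have hIH := ih (fun i => E (i+1)) hrest2
      rcases i with _ | i
      · exact hE0p
      · exact hIH i (Nat.succ_le_succ_iff.mp hi)


/-! ### The heart of the theorem -/

lemma main_min {m : ℕ} (s : Fin m → PA m)
    (C : Subalgebra ℂ (PA m)) (hC : C = Algebra.adjoin ℂ (Set.range s))
    (P : Ideal (PA m)) (hPprime : P.IsPrime)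
    (hPpoisson : ∀ u ∈ P, ∀ r : PA m, pbr s (fun _ => 1) u r ∈ P)
    (f g : PA m) (hfg : pbr s (fun _ => 1) f g ∉ P)
    (p : Ideal (PA m)) (hpp : p.IsPrime)
    (hIp : Ideal.map C.val (Ideal.comap C.val P) ≤ p) (hpP : p ≤ P) :
    P ≤ p := by
  classical
  intro a haP
  by_contra hap
  haveI := hpp
  set L := FractionRing (PA m ⧸ p) with hL
  set ρA : PA m →ₐ[ℂ] L :=
    (IsScalarTower.toAlgHom ℂ (PA m ⧸ p) L).comp (Ideal.Quotient.mkₐ ℂ p) with hρA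
  have hker : ∀ z : PA m, ρA z = 0 ↔ z ∈ p := by
    intro z
    constructor
    · intro h
      have h1 : algebraMap (PA m ⧸ p) L (Ideal.Quotient.mk p z) = 0 := h
      have h2 : (Ideal.Quotient.mk p z) = 0 :=
        (IsFractionRing.to_map_eq_zero_iff (K := L)).mp h1
      exact Ideal.Quotient.eq_zero_iff_mem.mp h2
    · intro h
      have h1 : Ideal.Quotient.mk p z = 0 := Ideal.Quotient.eq_zero_iff_mem.mpr h
      show algebraMap (PA m ⧸ p) L (Ideal.Quotient.mk p z) = 0
      rw [h1, map_zero]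
  set x : Fin (m+2) → L := fun j => ρA (MvPolynomial.X j) with hxdef
  have hx : ∀ z : PA m, MvPolynomial.aeval x z = ρA z := by
    intro z
    have h1 : (ρA.comp (MvPolynomial.aeval MvPolynomial.X)) = MvPolynomial.aeval x :=
      MvPolynomial.comp_aeval MvPolynomial.X ρA
    have h2 := AlgHom.congr_fun h1 z
    rw [AlgHom.comp_apply, MvPolynomial.aeval_X_left_apply] at h2
    exact h2.symm
  have hfrac : ∀ l : L, ∃ b c : MvPolynomial (Fin (m+2)) ℂ,
      MvPolynomial.aeval x c ≠ 0 ∧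
        l * MvPolynomial.aeval x c = MvPolynomial.aeval x b := by
    intro l
    obtain ⟨⟨num, den⟩, hrel⟩ := IsLocalization.surj (nonZeroDivisors (PA m ⧸ p)) l
    obtain ⟨b, hb⟩ := Ideal.Quotient.mk_surjective num
    obtain ⟨c, hcq⟩ := Ideal.Quotient.mk_surjective (den : PA m ⧸ p)
    have hden : ρA c = algebraMap (PA m ⧸ p) L (den : PA m ⧸ p) := by
      show algebraMap (PA m ⧸ p) L (Ideal.Quotient.mk p c) = _
      rw [hcq]
    have hnum : ρA b = algebraMap (PA m ⧸ p) L num := by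
      show algebraMap (PA m ⧸ p) L (Ideal.Quotient.mk p b) = _
      rw [hb]
    refine ⟨b, c, ?_, ?_⟩
    · rw [hx, hden]
      intro h0
      exact nonZeroDivisors.ne_zero den.2
        ((IsFractionRing.to_map_eq_zero_iff (K := L)).mp h0)
    · rw [hx, hx, hden, hnum]
      exact hrel
  have hdet : (Matrix.of fun i j =>
      MvPolynomial.aeval x (pderiv j (Fv s f g i))).det ≠ 0 := by
    have hrows : Matrix.of (pbrRows s (fun _ => 1) f g)
        = Matrix.of (fun i j => pderiv j (Fv s f g i)) := by
      ext i j
      rw [pbrRows_one]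
      refine Fin.cases ?_ (fun i1 => ?_) i
      · rfl
      · refine Fin.cases ?_ (fun k => ?_) i1
        · rfl
        · rfl
    have hmap : (Matrix.of fun i j => MvPolynomial.aeval x (pderiv j (Fv s f g i)))
        = (ρA : PA m →+* L).mapMatrix (Matrix.of fun i j => pderiv j (Fv s f g i)) := by
      ext i j
      simp only [Matrix.of_apply, RingHom.mapMatrix_apply, Matrix.map_apply]
      rw [hx]
      rfl
    rw [hmap, ← RingHom.map_det]
    have hpbr : (Matrix.of fun i j => pderiv j (Fv s f g i)).det
        = pbr s (fun _ => 1) f g := by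
      rw [← hrows]; rfl
    rw [hpbr]
    show ¬ ρA (pbr s (fun _ => 1) f g) = 0
    rw [hker]
    exact fun h => hfg (hpP h)
  obtain ⟨N, cpoly, hcN, hcrel⟩ := algebraic_rel x hfrac (Fv s f g) hdet (ρA a)
  have hy : ∀ t : MvPolynomial (Fin (m+2)) ℂ,
      MvPolynomial.aeval (fun i => MvPolynomial.aeval x (Fv s f g i)) t
        = ρA (MvPolynomial.aeval (Fv s f g) t) := by
    intro t
    have h2 := MvPolynomial.comp_aeval (Fv s f g) ρA
    have h3 := AlgHom.congr_fun h2 t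
    rw [AlgHom.comp_apply] at h3
    have hfun : (fun i => MvPolynomial.aeval x (Fv s f g i))
        = fun i => ρA (Fv s f g i) := funext fun i => hx _
    rw [hfun]
    exact h3.symm
  have hsump : (∑ i ∈ Finset.range (N+1),
      MvPolynomial.aeval (Fv s f g) (cpoly i) * a ^ i) ∈ p := by
    rw [← hker, map_sum]
    have hterm : ∀ i ∈ Finset.range (N+1),
        ρA (MvPolynomial.aeval (Fv s f g) (cpoly i) * a ^ i)
          = MvPolynomial.aeval (fun i => MvPolynomial.aeval x (Fv s f g i)) (cpoly i)
            * (ρA a) ^ i := by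
      intro i _
      rw [map_mul, map_pow, hy]
    rw [Finset.sum_congr rfl hterm]
    exact hcrel
  have hq : ∀ t : TT m, MvPolynomial.aeval s t ∈ P → MvPolynomial.aeval s t ∈ p := by
    intro t ht
    have hzC : MvPolynomial.aeval s t ∈ C := by
      rw [hC, Algebra.adjoin_range_eq_range_aeval]
      exact ⟨t, rfl⟩
    have hmem : (⟨MvPolynomial.aeval s t, hzC⟩ : C) ∈ Ideal.comap C.val P := by
      simpa [Ideal.mem_comap] using ht
    have := Ideal.mem_map_of_mem C.val hmem
    exact hIp this
  have hsump2 : (∑ i ∈ Finset.range (N+1), ΦP s f g (Θm m (cpoly i)) * a ^ i) ∈ p := by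
    have : ∀ i ∈ Finset.range (N+1),
        ΦP s f g (Θm m (cpoly i)) * a ^ i
          = MvPolynomial.aeval (Fv s f g) (cpoly i) * a ^ i := by
      intro i _
      rw [PhiP_Theta]
    rw [Finset.sum_congr rfl this]
    exact hsump
  have hall := lemA s f g P hPprime hPpoisson hfg p hpp hpP hq a haP hap N
    (fun i => Θm m (cpoly i)) hsump2 N le_rfl
  have hEN : MvPolynomial.aeval (Fv s f g) (cpoly N) ∈ p := by
    rw [← PhiP_Theta]
    exact hall
  apply hcN
  rw [hy, (hker _).mpr hEN]


end St12

theorem statement_12 {m : ℕ} (hm : 1 ≤ m)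
    (s : Fin m → PA m)
    (hind : AlgebraicIndependent ℂ s)
    (C : Subalgebra ℂ (PA m)) (hC : C = Algebra.adjoin ℂ (Set.range s))
    (P : Ideal (PA m)) (hPprime : P.IsPrime)
    (hPpoisson : ∀ u ∈ P, ∀ r : PA m, pbr s (fun _ => 1) u r ∈ P)
    (hproper : ¬ ∀ f g : PA m, pbr s (fun _ => 1) f g ∈ P) :
    P ∈ (Ideal.map C.val (Ideal.comap C.val P)).minimalPrimes ∧
    ∃ Q : Ideal C, Q.IsPrime ∧ P ∈ (Ideal.map C.val Q).minimalPrimes := by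
  haveI := hPprime
  obtain ⟨f, g, hfg⟩ : ∃ f g : PA m, pbr s (fun _ => 1) f g ∉ P := by
    simpa only [not_forall] using hproper
  have hmin : ∀ p : Ideal (PA m), p.IsPrime →
      Ideal.map C.val (Ideal.comap C.val P) ≤ p → p ≤ P → P ≤ p :=
    fun p hpp hIp hpP =>
      St12.main_min s C hC P hPprime hPpoisson f g hfg p hpp hIp hpP
  have hmem : P ∈ (Ideal.map C.val (Ideal.comap C.val P)).minimalPrimes :=
    ⟨⟨hPprime, Ideal.map_comap_le⟩, fun {q} hq hqP => hmin q hq.1 hq.2 hqP⟩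
  exact ⟨hmem, ⟨Ideal.comap C.val P, Ideal.IsPrime.comap _, hmem⟩⟩

end
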